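/- Let n ≥ 0 and let π be in Perm_{n+1}. With the convention π(0) = 0, set x = π^{-1}(n+1), z = max{π(i) : 0 ≤ i ≤ x−1}, y = π^{-1}(z) (with y = 0 when z = 0), and w = min{π(i) : x ≤ i ≤ n+1}. Then x−1 ≤ z ≤ n and x−1 ≤ w ≤ x, and the following hold. (1) If z = n and z < w, then x = n+1, w = n+1, and {π(i) : 1 ≤ i ≤ n, i ≠ y} = {1,2,…,n−1}. (2) If z < n and z < w, then 1 ≤ x ≤ n, z = x−1, w = x, {π(i) : 1 ≤ i ≤ x−1, i ≠ y} = {1,…,x−2}, and {π(i) : x+1 ≤ i ≤ n+1} = {x,x+1,…,n}. (3) If z = n and z > w, then 2 ≤ x ≤ n, w = x−1, {π(i) : 1 ≤ i ≤ x−1, i ≠ y} = {1,…,x−2}, and {π(i) : x+1 ≤ i ≤ n+1} = {x−1,x,…,n−1}. (4) If z < n and z > w, then 2 ≤ x ≤ n−1, x−1 < z < n, w = x−1, {π(i) : 1 ≤ i ≤ x−1, i ≠ y} = {1,…,x−2}, {π(i) : x+1 ≤ i ≤ z+1} = {x−1,x,…,z−1}, and {π(i) : z+2 ≤ i ≤ n+1}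 = {z+1,z+2,…,n}. -/

import Mathlib

/-- An `F`-step: `(0,1)` or `(a,b)` with `a ≥ 1` and `b ≤ 1`. -/
def IsFStep (s : ℤ × ℤ) : Prop := s = (0, 1) ∨ (1 ≤ s.1 ∧ s.2 ≤ 1)

/-- An `F`-path: a sequence of `F`-steps whose prefix sums satisfy
`a_1 + ⋯ + a_i ≤ b_1 + ⋯ + b_i`. -/
def IsFPath (Q : List (ℤ × ℤ)) : Prop :=
  (∀ s ∈ Q, IsFStep s) ∧
  ∀ i : ℕ, ((Q.take i).map Prod.fst).sum ≤ ((Q.take i).map Prod.snd).sum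

/-- The set of `F`-paths of length `n`. -/
def FPaths (n : ℕ) : Set (List (ℤ × ℤ)) := {Q | Q.length = n ∧ IsFPath Q}

def fheight (Q : List (ℤ × ℤ)) : ℤ := (Q.map Prod.snd).sum - (Q.map Prod.fst).sum

def fnorth (Q : List (ℤ × ℤ)) : ℕ := Q.countP (fun s => decide (s = ((0 : ℤ), (1 : ℤ))))

def faone (Q : List (ℤ × ℤ)) : ℕ := Q.countP (fun s => decide (s.1 = 1))

def fbone (Q : List (ℤ × ℤ)) : ℕ := Q.countP (fun s => decide (s.2 = 1))

/-- Steps of a Schröder path. -/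
inductive SStep : Type
  | u | d | h
deriving DecidableEq

/-- The width of a Schröder step. -/
def swidth : SStep → ℕ
  | .u => 1
  | .d => 1
  | .h => 2

/-- The height-change of a Schröder step. -/
def shc : SStep → ℤ
  | .u => 1
  | .d => -1
  | .h => 0

/-- A Schröder path of semilength `n`. -/
def IsSchroder (n : ℕ) (P : List SStep) : Prop :=
  (P.map swidth).sum = 2 * n ∧ (P.map shc).sum = 0 ∧
  ∀ i : ℕ, 0 ≤ ((P.take i).map shc).sum

/-- Schröder paths of semilength `n` without triple descents. -/
def SchP (n : ℕ) : Set (List SStep) :=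
  {P | IsSchroder n P ∧ ¬ [SStep.d, SStep.d, SStep.d] <:+: P}

/-- Number of `h` letters preceded by a prefix of total height-change `0`. -/
noncomputable def scomp (P : List SStep) : ℕ :=
  Set.ncard {i : ℕ | P[i]? = some SStep.h ∧ ((P.take i).map shc).sum = 0}

/-- Number of `h` letters plus number of double descents. -/
noncomputable def shdd (P : List SStep) : ℕ :=
  P.countP (fun s => decide (s = SStep.h)) +
    Set.ncard {i : ℕ | P[i]? = some SStep.d ∧ P[i + 1]? = some SStep.d}

/-- Number of peaks `ud`. -/
noncomputable def speak (P : List SStep) : ℕ :=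
  Set.ncard {i : ℕ | P[i]? = some SStep.u ∧ P[i + 1]? = some SStep.d}

/-- Steps of a bicolored Dyck path: up, red down, black down. -/
inductive BStep : Type
  | u | dR | dB
deriving DecidableEq

/-- A restricted bicolored Dyck path of semilength `n`:
`u^{i_1} dR^{j_1} dB^{k_1} ⋯ u^{i_{ℓ-1}} dR^{j_{ℓ-1}} dB^{k_{ℓ-1}} u^{i_ℓ} dR^{j_ℓ}`
with positive `i`'s and `k`'s, `∑ i = n`, `∑ j + ∑ k = n`, and every prefix having
at least as many `u`'s as down steps. -/
def IsRBD (n : ℕ) (B : List BStep) : Prop :=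
  (∃ (blocks : List (ℕ × ℕ × ℕ)) (iL jL : ℕ),
    (∀ t ∈ blocks, 1 ≤ t.1 ∧ 1 ≤ t.2.2) ∧ 1 ≤ iL ∧
    B = (blocks.map (fun t =>
        List.replicate t.1 BStep.u ++ List.replicate t.2.1 BStep.dR ++
          List.replicate t.2.2 BStep.dB)).flatten ++
        (List.replicate iL BStep.u ++ List.replicate jL BStep.dR) ∧
    (blocks.map (fun t => t.1)).sum + iL = n ∧
    (blocks.map (fun t => t.2.1)).sum + jL + (blocks.map (fun t => t.2.2)).sum = n) ∧
  ∀ i : ℕ, (B.take i).countP (fun s => decide (s ≠ BStep.u)) ≤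
    (B.take i).countP (fun s => decide (s = BStep.u))

/-- The length of the final run of red down steps. -/
def blast (B : List BStep) : ℕ := (B.reverse.takeWhile (fun s => decide (s = BStep.dR))).length

/-- The number of double ascents `uu`. -/
noncomputable def bdasc (B : List BStep) : ℕ :=
  Set.ncard {i : ℕ | B[i]? = some BStep.u ∧ B[i + 1]? = some BStep.u}

/-- The number of occurrences of `u dB u` or `dR dB u`. -/
noncomputable def bbval (B : List BStep) : ℕ :=
  Set.ncard {i : ℕ | (B[i]? = some BStep.u ∨ B[i]? = some BStep.dR) ∧
    B[i + 1]? = some BStep.dB ∧ B[i + 2]? = some BStep.u}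

/-- `π : ℕ → ℕ` encodes a permutation of `{1,…,N}`, with value `0` outside
(in particular `π 0 = 0`). -/
def IsPermOn (N : ℕ) (π : ℕ → ℕ) : Prop :=
  Set.BijOn π (Set.Icc 1 N) (Set.Icc 1 N) ∧ ∀ i, i ∉ Set.Icc 1 N → π i = 0

/-- `π` contains the pattern given by the word `σ`. -/
def ContainsPat (N : ℕ) (π : ℕ → ℕ) (σ : List ℕ) : Prop :=
  ∃ f : Fin σ.length → ℕ, StrictMono f ∧ (∀ t, f t ∈ Set.Icc 1 N) ∧
    ∀ s t : Fin σ.length, π (f s) < π (f t) ↔ σ.get s < σ.get t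

/-- Permutations of `{1,…,N}` avoiding the patterns `2341`, `2431` and `3241`. -/
def PermSet (N : ℕ) : Set (ℕ → ℕ) :=
  {π | IsPermOn N π ∧ ¬ContainsPat N π [2, 3, 4, 1] ∧ ¬ContainsPat N π [2, 4, 3, 1] ∧
    ¬ContainsPat N π [3, 2, 4, 1]}

/-- `block(π)`: the number of `j ∈ {1,…,N}` with `{π(1),…,π(j)} = {1,…,j}`. -/
noncomputable def blockStat (N : ℕ) (π : ℕ → ℕ) : ℕ :=
  Set.ncard {j : ℕ | 1 ≤ j ∧ j ≤ N ∧ π '' Set.Icc 1 j = Set.Icc 1 j}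

/-- `asc(π)`: the number of ascents of `π`. -/
noncomputable def ascStat (N : ℕ) (π : ℕ → ℕ) : ℕ :=
  Set.ncard {i : ℕ | 1 ≤ i ∧ i + 1 ≤ N ∧ π i < π (i + 1)}

/-- `crit(π)`: the number of critical entries of `π`. -/
noncomputable def critStat (N : ℕ) (π : ℕ → ℕ) : ℕ :=
  Set.ncard {i : ℕ | 1 ≤ i ∧ i ≤ N ∧ ∀ j k : ℕ, 1 ≤ j → j < i → i < k → k ≤ N →
    π j < π i → π k < π i → π j < π k}

/-- An inversion sequence: `0 ≤ e_i < i` (1-indexed). -/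
def IsInvSeq (e : List ℕ) : Prop := ∀ i : Fin e.length, e.get i < i.val + 1

/-- `e` contains the pattern `101`. -/
def Contains101 (e : List ℕ) : Prop :=
  ∃ i j k : Fin e.length, i < j ∧ j < k ∧ e.get j < e.get i ∧ e.get i = e.get k

/-- `e` contains the pattern `102`. -/
def Contains102 (e : List ℕ) : Prop :=
  ∃ i j k : Fin e.length, i < j ∧ j < k ∧ e.get j < e.get i ∧ e.get i < e.get k

/-- `e` contains the pattern `021`. -/
def Contains021 (e : List ℕ) : Prop :=
  ∃ i j k : Fin e.length, i < j ∧ j < k ∧ e.get i < e.get k ∧ e.get k < e.get j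

/-- Inversion sequences of length `n` avoiding `101` and `102`. -/
def ISet (n : ℕ) : Set (List ℕ) :=
  {e | e.length = n ∧ IsInvSeq e ∧ ¬Contains101 e ∧ ¬Contains102 e}

/-- Inversion sequences of length `n` avoiding `101` and `021`. -/
def JSet (n : ℕ) : Set (List ℕ) :=
  {e | e.length = n ∧ IsInvSeq e ∧ ¬Contains101 e ∧ ¬Contains021 e}

/-- The largest entry of `e` (`0` for the empty sequence). -/
def maxVal (e : List ℕ) : ℕ := e.foldr max 0

/-- The largest (1-indexed) position of the maximal entry of `e`. -/
def maxid (e : List ℕ) : ℕ := e.length - e.reverse.idxOf (maxVal e)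

/-- `e` with the entry at position `maxid e` removed. -/
def ehat (e : List ℕ) : List ℕ := e.eraseIdx (maxid e - 1)

/-- `omi(e)`: the number of `i ∈ {1,…,n}` not occurring as an entry of `e`. -/
noncomputable def omi (e : List ℕ) : ℕ := Set.ncard {i : ℕ | 1 ≤ i ∧ i ≤ e.length ∧ i ∉ e}

/-- `cons(e)`: the number of `i ∈ {1,…,n-1}` such that both `i-1` and `i` occur in `e`. -/
noncomputable def consStat (e : List ℕ) : ℕ :=
  Set.ncard {i : ℕ | 1 ≤ i ∧ i + 1 ≤ e.length ∧ (i - 1) ∈ e ∧ i ∈ e}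

/-- `first(e)`: the length of the initial run of zeros of `e`. -/
def firstStat (e : List ℕ) : ℕ := (e.takeWhile (fun v => decide (v = 0))).length

/-- `single(e)`: the number of positive integers occurring exactly once in `e`. -/
noncomputable def singleStat (e : List ℕ) : ℕ := Set.ncard {v : ℕ | 1 ≤ v ∧ e.count v = 1}

/-- The binomial coefficient `C(p,q)`, interpreted as `0` unless `0 ≤ q ≤ p`. -/
def C (p q : ℤ) : ℤ := if 0 ≤ q ∧ q ≤ p then (p.toNat.choose q.toNat : ℤ) else 0


lemma pat4 (N : ℕ) (π : ℕ → ℕ) (w1 w2 w3 w4 : ℕ) (i j k l : ℕ)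
    (h1 : i < j) (h2 : j < k) (h3 : k < l) (hi : 1 ≤ i) (hl : l ≤ N)
    (hv : ∀ s t : Fin 4, π (![i,j,k,l] s) < π (![i,j,k,l] t) ↔
      ([w1,w2,w3,w4].get s) < ([w1,w2,w3,w4].get t)) :
    ContainsPat N π [w1, w2, w3, w4] := by
  refine ⟨![i,j,k,l], ?_, ?_, hv⟩
  · intro s t hst
    fin_cases s <;> fin_cases t <;> simp_all <;> omega
  · intro t
    fin_cases t <;> simp [Set.mem_Icc] <;> omega

lemma has2341 (N : ℕ) (π : ℕ → ℕ) (i j k l : ℕ)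
    (h1 : i < j) (h2 : j < k) (h3 : k < l) (hi : 1 ≤ i) (hl : l ≤ N)
    (hv : π l < π i ∧ π i < π j ∧ π j < π k) :
    ContainsPat N π [2, 3, 4, 1] := by
  apply pat4 N π 2 3 4 1 i j k l h1 h2 h3 hi hl
  intro s t; fin_cases s <;> fin_cases t <;>
    simp [List.get, Matrix.cons_val_zero, Matrix.cons_val_one, Matrix.head_cons,
      Matrix.cons_val_fin_one] <;> omega

lemma has3241 (N : ℕ) (π : ℕ → ℕ) (i j k l : ℕ)
    (h1 : i < j) (h2 : j < k) (h3 : k < l) (hi : 1 ≤ i) (hl : l ≤ N)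
    (hv : π l < π j ∧ π j < π i ∧ π i < π k) :
    ContainsPat N π [3, 2, 4, 1] := by
  apply pat4 N π 3 2 4 1 i j k l h1 h2 h3 hi hl
  intro s t; fin_cases s <;> fin_cases t <;>
    simp [List.get, Matrix.cons_val_zero, Matrix.cons_val_one, Matrix.head_cons,
      Matrix.cons_val_fin_one] <;> omega

lemma has2431 (N : ℕ) (π : ℕ → ℕ) (i j k l : ℕ)
    (h1 : i < j) (h2 : j < k) (h3 : k < l) (hi : 1 ≤ i) (hl : l ≤ N)
    (hv : π l < π i ∧ π i < π k ∧ π k < π j) :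
    ContainsPat N π [2, 4, 3, 1] := by
  apply pat4 N π 2 4 3 1 i j k l h1 h2 h3 hi hl
  intro s t; fin_cases s <;> fin_cases t <;>
    simp [List.get, Matrix.cons_val_zero, Matrix.cons_val_one, Matrix.head_cons,
      Matrix.cons_val_fin_one] <;> omega


/-- Lemma 3.1: the structure of `(2341,2431,3241)`-avoiding permutations. -/
theorem avoiding_perm_shape (n : ℕ) (π : ℕ → ℕ) (hπ : π ∈ PermSet (n + 1))
    (x y z w : ℕ)
    (hx : x ∈ Set.Icc 1 (n + 1) ∧ π x = n + 1)
    (hz : IsGreatest (π '' Set.Iio x) z)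
    (hy : y < x ∧ π y = z)
    (hw : IsLeast (π '' Set.Icc x (n + 1)) w) :
    (x - 1 ≤ z ∧ z ≤ n ∧ x - 1 ≤ w ∧ w ≤ x) ∧
    ((z = n ∧ z < w) →
      x = n + 1 ∧ w = n + 1 ∧
      π '' {i : ℕ | 1 ≤ i ∧ i ≤ n ∧ i ≠ y} = Set.Icc 1 (n - 1)) ∧
    ((z < n ∧ z < w) →
      1 ≤ x ∧ x ≤ n ∧ z = x - 1 ∧ w = x ∧
      π '' {i : ℕ | 1 ≤ i ∧ i ≤ x - 1 ∧ i ≠ y} = Set.Icc 1 (x - 2) ∧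
      π '' Set.Icc (x + 1) (n + 1) = Set.Icc x n) ∧
    ((z = n ∧ w < z) →
      2 ≤ x ∧ x ≤ n ∧ w = x - 1 ∧
      π '' {i : ℕ | 1 ≤ i ∧ i ≤ x - 1 ∧ i ≠ y} = Set.Icc 1 (x - 2) ∧
      π '' Set.Icc (x + 1) (n + 1) = Set.Icc (x - 1) (n - 1)) ∧
    ((z < n ∧ w < z) →
      2 ≤ x ∧ x ≤ n - 1 ∧ x - 1 < z ∧ z < n ∧ w = x - 1 ∧
      π '' {i : ℕ | 1 ≤ i ∧ i ≤ x - 1 ∧ i ≠ y} = Set.Icc 1 (x - 2) ∧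
      π '' Set.Icc (x + 1) (z + 1) = Set.Icc (x - 1) (z - 1) ∧
      π '' Set.Icc (z + 2) (n + 1) = Set.Icc (z + 1) n) := by
  obtain ⟨⟨hbij, h0⟩, hav1, hav2, hav3⟩ := hπ
  obtain ⟨hx1N, hπx⟩ := hx
  rw [Set.mem_Icc] at hx1N
  obtain ⟨hx1, hxN⟩ := hx1N
  obtain ⟨hyx, hπy⟩ := hy
  -- basic facts
  have hmem : ∀ i, 1 ≤ i → i ≤ n + 1 → 1 ≤ π i ∧ π i ≤ n + 1 := by
    intro i h1 h2
    exact Set.mem_Icc.mp (hbij.1 (Set.mem_Icc.mpr ⟨h1, h2⟩))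
  have hpos : ∀ i, 1 ≤ π i → 1 ≤ i ∧ i ≤ n + 1 := by
    intro i h1
    by_contra hc
    have h2 : i ∉ Set.Icc 1 (n + 1) := by rw [Set.mem_Icc]; omega
    have := h0 i h2
    omega
  have hinj : ∀ a b, 1 ≤ π a → π a = π b → a = b := by
    intro a b h1 h2
    have ha := hpos a h1
    have hb := hpos b (by omega)
    exact hbij.2.1 (Set.mem_Icc.mpr ha) (Set.mem_Icc.mpr hb) h2
  have hub : ∀ i, i < x → π i ≤ z := fun i hi => hz.2 ⟨i, hi, rfl⟩
  obtain ⟨m, hm, hπm⟩ := hw.1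
  rw [Set.mem_Icc] at hm
  have hwle : ∀ i, x ≤ i → i ≤ n + 1 → w ≤ π i := fun i h1 h2 =>
    hw.2 ⟨i, Set.mem_Icc.mpr ⟨h1, h2⟩, rfl⟩
  have hw1 : 1 ≤ w ∧ w ≤ n + 1 := by
    have := hmem m (by omega) hm.2; omega
  have hzn : z ≤ n := by
    rcases Nat.eq_zero_or_pos z with h | h
    · omega
    · have hy1 := hpos y (by omega)
      have h2 := hmem y hy1.1 hy1.2
      by_contra hc
      have : y = x := hinj y x (by omega) (by rw [hπy, hπx]; omega)
      omega
  have hinjOn : ∀ s : Finset ℕ, (∀ i ∈ s, 1 ≤ π i) → Set.InjOn π ↑s := by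
    intro s hs p hp q hq hpq
    exact hinj p q (hs p hp) hpq
  -- z ≥ x - 1
  have hzx1 : x - 1 ≤ z := by
    have hf : ∀ i ∈ Finset.Icc 1 (x - 1), π i ∈ Finset.Icc 1 z := by
      intro i hi
      rw [Finset.mem_Icc] at hi ⊢
      have := hmem i hi.1 (by omega)
      exact ⟨this.1, hub i (by omega)⟩
    have hle := Finset.card_le_card_of_injOn π hf (hinjOn _ (fun i hi => by
      rw [Finset.mem_Icc] at hi; exact (hmem i hi.1 (by omega)).1))
    rw [Nat.card_Icc, Nat.card_Icc] at hle
    omega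
  -- w ≤ x
  have hwx : w ≤ x := by
    have hf : ∀ i ∈ Finset.Icc x (n + 1), π i ∈ Finset.Icc w (n + 1) := by
      intro i hi
      rw [Finset.mem_Icc] at hi ⊢
      have := hmem i (by omega) hi.2
      exact ⟨hwle i hi.1 hi.2, this.2⟩
    have hle := Finset.card_le_card_of_injOn π hf (hinjOn _ (fun i hi => by
      rw [Finset.mem_Icc] at hi; exact (hmem i (by omega) hi.2).1))
    rw [Nat.card_Icc, Nat.card_Icc] at hle
    omega
  -- key avoidance lemma A
  have keyA : ∀ k, x ≤ k → k ≤ n + 1 → x ≤ π k + 1 := by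
    intro k hk1 hk2
    by_contra hc
    push_neg at hc
    have hπk := hmem k (by omega) hk2
    have hkx : x < k := by
      rcases eq_or_lt_of_le hk1 with h | h
      · rw [h] at hπx; omega
      · exact h
    have hsub : ∀ i ∈ Finset.filter (fun i => π i ≤ x - 2) (Finset.Icc 1 (x - 1)),
        π i ∈ (Finset.Icc 1 (x - 2)).erase (π k) := by
      intro i hi
      simp only [Finset.mem_filter, Finset.mem_Icc] at hi
      have h1 := hmem i hi.1.1 (by omega)
      rw [Finset.mem_erase, Finset.mem_Icc]
      refine ⟨fun he => ?_, h1.1, hi.2⟩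
      have := hinj i k (by omega) he
      omega
    have hc1 : (Finset.filter (fun i => π i ≤ x - 2) (Finset.Icc 1 (x - 1))).card ≤ x - 3 := by
      have hle := Finset.card_le_card_of_injOn π hsub (hinjOn _ (fun i hi => by
        simp only [Finset.mem_filter, Finset.mem_Icc] at hi
        exact (hmem i hi.1.1 (by omega)).1))
      have he : ((Finset.Icc 1 (x - 2)).erase (π k)).card = x - 3 := by
        rw [Finset.card_erase_of_mem (by rw [Finset.mem_Icc]; omega), Nat.card_Icc]
        omega
      omega
    have hsplit := Finset.card_filter_add_card_filter_not
      (s := Finset.Icc 1 (x - 1)) (p := fun i => π i ≤ x - 2)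
    rw [Nat.card_Icc] at hsplit
    obtain ⟨i, hi, j, hj, hij⟩ := Finset.one_lt_card.mp
      (show 1 < (Finset.filter (fun a => ¬ π a ≤ x - 2) (Finset.Icc 1 (x - 1))).card
        by omega)
    simp only [Finset.mem_filter, Finset.mem_Icc, not_le] at hi hj
    have hπij : π i ≠ π j := fun he => hij (hinj i j (by omega) he)
    have hubi := hub i (by omega)
    have hubj := hub j (by omega)
    -- wlog i < j
    rcases lt_or_gt_of_ne hij with h | h
    · rcases lt_or_gt_of_ne hπij with h2 | h2
      · exact absurd (has2341 (n + 1) π i j x k h (by omega) hkx (by omega) hk2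
          ⟨by omega, h2, by rw [hπx]; omega⟩) hav1
      · exact absurd (has3241 (n + 1) π i j x k h (by omega) hkx (by omega) hk2
          ⟨by omega, h2, by rw [hπx]; omega⟩) hav3
    · rcases lt_or_gt_of_ne hπij with h2 | h2
      · exact absurd (has3241 (n + 1) π j i x k h (by omega) hkx (by omega) hk2
          ⟨by omega, h2, by rw [hπx]; omega⟩) hav3
      · exact absurd (has2341 (n + 1) π j i x k h (by omega) hkx (by omega) hk2
          ⟨by omega, h2, by rw [hπx]; omega⟩) hav1
  have hwx1 : x - 1 ≤ w := by
    have := keyA m hm.1 hm.2; omega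
  -- every small value has a preimage before x
  have keyPre : ∀ v, 1 ≤ v → v + 2 ≤ x → ∃ k, 1 ≤ k ∧ k + 1 ≤ x ∧ π k = v := by
    intro v h1 h2
    obtain ⟨k, hk, hπk⟩ := hbij.2.2 (Set.mem_Icc.mpr ⟨h1, by omega⟩)
    rw [Set.mem_Icc] at hk
    refine ⟨k, hk.1, ?_, hπk⟩
    by_contra hc
    have := keyA k (by omega) hk.2
    omega
  have imageSmall : π '' {i : ℕ | 1 ≤ i ∧ i ≤ x - 1 ∧ i ≠ y} = Set.Icc 1 (x - 2) := by
    apply Set.Subset.antisymm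
    · rintro _ ⟨i, ⟨hi1, hi2, hiy⟩, rfl⟩
      have hπi := hmem i hi1 (by omega)
      rw [Set.mem_Icc]
      refine ⟨hπi.1, ?_⟩
      by_contra hc
      push_neg at hc
      have hz1 : 1 ≤ z := by have := hub i (by omega); omega
      have hy1 := hpos y (by omega)
      have hπiz : π i ≠ z := fun he => hiy (hinj i y (by omega) (by rw [he, hπy]))
      have hsub : insert (π i) (insert z (Finset.Icc 1 (x - 2))) ⊆
          Finset.image π (Finset.Icc 1 (x - 1)) := by
        intro v hv
        simp only [Finset.mem_insert, Finset.mem_Icc] at hv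
        rw [Finset.mem_image]
        rcases hv with rfl | rfl | hv
        · exact ⟨i, Finset.mem_Icc.mpr ⟨hi1, hi2⟩, rfl⟩
        · exact ⟨y, Finset.mem_Icc.mpr ⟨hy1.1, by omega⟩, hπy⟩
        · obtain ⟨k, h1, h2, h3⟩ := keyPre v hv.1 (by omega)
          exact ⟨k, Finset.mem_Icc.mpr ⟨h1, by omega⟩, h3⟩
      have hcard1 : (insert (π i) (insert z (Finset.Icc 1 (x - 2)))).card = x := by
        rw [Finset.card_insert_of_notMem (by
              simp only [Finset.mem_insert, Finset.mem_Icc]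
              push_neg
              exact ⟨hπiz, fun _ => by omega⟩),
            Finset.card_insert_of_notMem (by rw [Finset.mem_Icc]; omega), Nat.card_Icc]
        omega
      have hcard2 : (Finset.image π (Finset.Icc 1 (x - 1))).card ≤ x - 1 := by
        calc (Finset.image π (Finset.Icc 1 (x - 1))).card
            ≤ (Finset.Icc 1 (x - 1)).card := Finset.card_image_le
          _ = x - 1 := by rw [Nat.card_Icc]; omega
      have := Finset.card_le_card hsub
      omega
    · rintro v hv
      rw [Set.mem_Icc] at hv
      obtain ⟨k, h1, h2, h3⟩ := keyPre v hv.1 (by omega)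
      refine ⟨k, ⟨h1, by omega, fun he => ?_⟩, h3⟩
      rw [he, hπy] at h3
      omega
  have hcase34 : w < z → 2 ≤ x ∧ w = x - 1 ∧ x ≤ n ∧ 1 ≤ y := by
    intro hlt
    have hz1 : 1 ≤ z := by omega
    have hy1 := (hpos y (by omega)).1
    have hx2 : 2 ≤ x := by omega
    have hwx' : w = x - 1 := by
      by_contra hc
      have hwx'' : w = x := by omega
      obtain ⟨k, hk, hπk⟩ := hbij.2.2
        (show x - 1 ∈ Set.Icc 1 (n + 1) from Set.mem_Icc.mpr ⟨by omega, by omega⟩)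
      rw [Set.mem_Icc] at hk
      rcases lt_or_ge k x with h | h
      · have hky : k ≠ y := fun he => by rw [he, hπy] at hπk; omega
        have : x - 1 ∈ Set.Icc 1 (x - 2) := by
          rw [← imageSmall]; exact ⟨k, ⟨hk.1, by omega, hky⟩, hπk⟩
        rw [Set.mem_Icc] at this
        omega
      · have := hwle k h hk.2
        omega
    have hmx : m ≠ x := fun he => by rw [he, hπx] at hπm; omega
    exact ⟨hx2, hwx', by omega, hy1⟩
  refine ⟨⟨hzx1, hzn, hwx1, hwx⟩, ?_, ?_, ?_, ?_⟩
  · -- Case 1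
    rintro ⟨h1, h2⟩
    have hwN : w = n + 1 := by omega
    have hxN' : x = n + 1 := by
      by_contra hc
      have h3 := hwle (n + 1) (by omega) le_rfl
      have h4 := hmem (n + 1) (by omega) le_rfl
      have : n + 1 = x := hinj (n + 1) x (by omega) (by rw [hπx]; omega)
      omega
    refine ⟨hxN', hwN, ?_⟩
    have hset : {i : ℕ | 1 ≤ i ∧ i ≤ n ∧ i ≠ y} = {i : ℕ | 1 ≤ i ∧ i ≤ x - 1 ∧ i ≠ y} := by
      ext i
      simp only [Set.mem_setOf_eq]
      constructor <;> (rintro ⟨a, b, c⟩; exact ⟨a, by omega, c⟩)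
    rw [hset, imageSmall]
    have : x - 2 = n - 1 := by omega
    rw [this]
  · -- Case 2
    rintro ⟨h1, h2⟩
    have hz' : z = x - 1 := by omega
    have hw' : w = x := by omega
    refine ⟨hx1, by omega, hz', hw', imageSmall, ?_⟩
    apply Set.Subset.antisymm
    · rintro _ ⟨i, hi, rfl⟩
      rw [Set.mem_Icc] at hi ⊢
      have h3 := hwle i (by omega) hi.2
      have h4 := hmem i (by omega) hi.2
      have h5 : π i ≠ n + 1 := fun he => by
        have := hinj i x (by omega) (by rw [he, hπx]); omega
      omega
    · rintro v hv
      rw [Set.mem_Icc] at hv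
      obtain ⟨k, hk, hπk⟩ := hbij.2.2
        (show v ∈ Set.Icc 1 (n + 1) from Set.mem_Icc.mpr ⟨le_trans hx1 hv.1, by omega⟩)
      rw [Set.mem_Icc] at hk
      refine ⟨k, Set.mem_Icc.mpr ⟨?_, hk.2⟩, hπk⟩
      rcases lt_trichotomy k x with h | h | h
      · have := hub k h; omega
      · rw [h, hπx] at hπk; omega
      · omega
  · -- Case 3
    rintro ⟨h1, h2⟩
    obtain ⟨hx2, hwx', hxn, hy1⟩ := hcase34 h2
    refine ⟨hx2, hxn, hwx', imageSmall, ?_⟩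
    apply Set.Subset.antisymm
    · rintro _ ⟨i, hi, rfl⟩
      rw [Set.mem_Icc] at hi ⊢
      have h3 := hwle i (by omega) hi.2
      have h4 := hmem i (by omega) hi.2
      have h5 : π i ≠ n + 1 := fun he => by
        have := hinj i x (by omega) (by rw [he, hπx]); omega
      have h6 : π i ≠ n := fun he => by
        have := hinj i y (by omega) (by rw [he, hπy, h1]); omega
      omega
    · rintro v hv
      rw [Set.mem_Icc] at hv
      obtain ⟨k, hk, hπk⟩ := hbij.2.2
        (show v ∈ Set.Icc 1 (n + 1) from Set.mem_Icc.mpr ⟨by omega, by omega⟩)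
      rw [Set.mem_Icc] at hk
      refine ⟨k, Set.mem_Icc.mpr ⟨?_, hk.2⟩, hπk⟩
      rcases lt_trichotomy k x with h | h | h
      · exfalso
        have hky : k ≠ y := fun he => by rw [he, hπy, h1] at hπk; omega
        have : v ∈ Set.Icc 1 (x - 2) := by
          rw [← imageSmall]; exact ⟨k, ⟨by omega, by omega, hky⟩, hπk⟩
        rw [Set.mem_Icc] at this
        omega
      · rw [h, hπx] at hπk; omega
      · omega
  · -- Case 4
    rintro ⟨h1, h2⟩
    obtain ⟨hx2, hwx', hxn, hy1⟩ := hcase34 h2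
    have hxz : x - 1 < z := by omega
    have hxn1 : x ≤ n - 1 := by omega
    have keyB : ∀ k, x + 1 ≤ k → k ≤ z + 1 → x - 1 ≤ π k ∧ π k ≤ z - 1 := by
      intro k hk1 hk2
      have hkN : k ≤ n + 1 := by omega
      have h3 := hwle k (by omega) hkN
      have h4 := hmem k (by omega) hkN
      have h5 : π k ≠ z := fun he => by
        have := hinj k y (by omega) (by rw [he, hπy]); omega
      refine ⟨by omega, ?_⟩
      by_contra hc
      push_neg at hc
      have hπkz : z + 1 ≤ π k := by omega
      have h6 : π k ≠ n + 1 := fun he => by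
        have := hinj k x (by omega) (by rw [he, hπx]); omega
      have hex : ∃ p, k < p ∧ p ≤ n + 1 ∧ x - 1 ≤ π p ∧ π p ≤ z - 1 := by
        by_contra hc2
        push_neg at hc2
        have hsub : Finset.Icc (x - 1) (z - 1) ⊆ Finset.image π (Finset.Icc (x + 1) (k - 1)) := by
          intro u hu
          rw [Finset.mem_Icc] at hu
          obtain ⟨p, hp, hπp⟩ := hbij.2.2
            (show u ∈ Set.Icc 1 (n + 1) from Set.mem_Icc.mpr ⟨by omega, by omega⟩)
          rw [Set.mem_Icc] at hp
          rw [Finset.mem_image]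
          refine ⟨p, Finset.mem_Icc.mpr ⟨?_, ?_⟩, hπp⟩
          · rcases lt_trichotomy p x with h | h | h
            · exfalso
              have hpy : p ≠ y := fun he => by rw [he, hπy] at hπp; omega
              have : u ∈ Set.Icc 1 (x - 2) := by
                rw [← imageSmall]; exact ⟨p, ⟨by omega, by omega, hpy⟩, hπp⟩
              rw [Set.mem_Icc] at this
              omega
            · exfalso; rw [h, hπx] at hπp; omega
            · omega
          · have hpk : p ≠ k := fun he => by rw [he] at hπp; omega
            by_contra hc3
            push_neg at hc3
            have := hc2 p (by omega) hp.2
            omega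
        have hc3 := Finset.card_le_card hsub
        have hc4 : (Finset.image π (Finset.Icc (x + 1) (k - 1))).card ≤ k - 1 + 1 - (x + 1) := by
          calc (Finset.image π (Finset.Icc (x + 1) (k - 1))).card
              ≤ (Finset.Icc (x + 1) (k - 1)).card := Finset.card_image_le
            _ = k - 1 + 1 - (x + 1) := by rw [Nat.card_Icc]
        rw [Nat.card_Icc] at hc3
        omega
      obtain ⟨p, hp1, hp2, hp3, hp4⟩ := hex
      exact absurd (has2431 (n + 1) π y x k p hyx (by omega) hp1 hy1 hp2
        ⟨by rw [hπy]; omega, by rw [hπy]; omega, by rw [hπx]; omega⟩) hav2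
    have hmid : Finset.image π (Finset.Icc (x + 1) (z + 1)) = Finset.Icc (x - 1) (z - 1) := by
      apply Finset.eq_of_subset_of_card_le
      · intro u hu
        rw [Finset.mem_image] at hu
        obtain ⟨p, hp, rfl⟩ := hu
        rw [Finset.mem_Icc] at hp ⊢
        exact keyB p hp.1 hp.2
      · rw [Finset.card_image_of_injOn (hinjOn _ (fun i hi => by
          rw [Finset.mem_Icc] at hi
          exact (hmem i (by omega) (by omega)).1))]
        rw [Nat.card_Icc, Nat.card_Icc]
        omega
    have hmid' : π '' Set.Icc (x + 1) (z + 1) = Set.Icc (x - 1) (z - 1) := by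
      calc π '' Set.Icc (x + 1) (z + 1)
          = ↑(Finset.image π (Finset.Icc (x + 1) (z + 1))) := by
            rw [Finset.coe_image, Finset.coe_Icc]
        _ = ↑(Finset.Icc (x - 1) (z - 1)) := by rw [hmid]
        _ = Set.Icc (x - 1) (z - 1) := Finset.coe_Icc _ _
    refine ⟨hx2, hxn1, hxz, h1, hwx', imageSmall, hmid', ?_⟩
    apply Set.Subset.antisymm
    · rintro _ ⟨i, hi, rfl⟩
      rw [Set.mem_Icc] at hi ⊢
      have h3 := hwle i (by omega) hi.2
      have h4 := hmem i (by omega) hi.2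
      have h5 : π i ≠ n + 1 := fun he => by
        have := hinj i x (by omega) (by rw [he, hπx]); omega
      have h6 : π i ≠ z := fun he => by
        have := hinj i y (by omega) (by rw [he, hπy]); omega
      have h7 : ¬(x - 1 ≤ π i ∧ π i ≤ z - 1) := by
        rintro ⟨ha, hb⟩
        have hmem2 : π i ∈ Finset.image π (Finset.Icc (x + 1) (z + 1)) := by
          rw [hmid, Finset.mem_Icc]; exact ⟨ha, hb⟩
        obtain ⟨p, hp, hpe⟩ := Finset.mem_image.mp hmem2
        have : p = i := hinj p i (by omega) hpe
        rw [Finset.mem_Icc] at hp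
        omega
      omega
    · rintro v hv
      rw [Set.mem_Icc] at hv
      obtain ⟨k, hk, hπk⟩ := hbij.2.2
        (show v ∈ Set.Icc 1 (n + 1) from Set.mem_Icc.mpr ⟨by omega, by omega⟩)
      rw [Set.mem_Icc] at hk
      refine ⟨k, Set.mem_Icc.mpr ⟨?_, hk.2⟩, hπk⟩
      by_contra hc
      push_neg at hc
      rcases lt_trichotomy k x with h | h | h
      · have hky : k ≠ y := fun he => by rw [he, hπy] at hπk; omega
        have : v ∈ Set.Icc 1 (x - 2) := by
          rw [← imageSmall]; exact ⟨k, ⟨by omega, by omega, hky⟩, hπk⟩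
        rw [Set.mem_Icc] at this
        omega
      · rw [h, hπx] at hπk; omega
      · have := keyB k (by omega) (by omega)
        omega
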